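/- Let c be a real constant. The function K_1(u_1^*, v_1^*, B^*) = v_1^*/(B^*-1)² + c·ln B^*/(B^*-1)² - c·ln B^* + c·ln(B^*-1) + c/(B^*-1), defined for B^* > 1, is a first integral of the characteristic vector field: (u_1^*+v_1^*)·∂K_1/∂u_1^* + (2v_1^* + 2c·ln B^*)·∂K_1/∂v_1^* + (B^*-1)·∂K_1/∂B^* = 0 at every point with B^* > 1. -/

import Mathlib

/-- The function `K₁` from the proof of Theorem 1.2 (the first argument `u₁*` is a dummy
variable on which `K₁` does not depend). -/
noncomputable def K1 (c u₁ v₁ B : ℝ) : ℝ :=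
  v₁ / (B - 1) ^ 2 + c * Real.log B / (B - 1) ^ 2 - c * Real.log B
    + c * Real.log (B - 1) + c / (B - 1)

lemma K1_hasDerivAt_B (c u₁ v₁ B : ℝ) (hB : 1 < B) :
    HasDerivAt (fun t => K1 c u₁ v₁ t)
      ((0 * (B - 1) ^ 2 - v₁ * (2 * (B - 1) * 1)) / ((B - 1) ^ 2) ^ 2
        + ((c * B⁻¹) * (B - 1) ^ 2 - c * Real.log B * (2 * (B - 1) * 1)) / ((B - 1) ^ 2) ^ 2
        - c * B⁻¹ + c * ((B - 1)⁻¹ * 1)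
        + (0 * (B - 1) - c * 1) / (B - 1) ^ 2) B := by
  have hB0 : B ≠ 0 := by linarith
  have hne : B - 1 ≠ 0 := by linarith
  have hsub : HasDerivAt (fun t : ℝ => t - 1) 1 B := (hasDerivAt_id B).sub_const 1
  have hsq : HasDerivAt (fun t : ℝ => (t - 1) ^ 2) (2 * (B - 1) ^ 1 * 1) B := by
    simpa using (hsub.fun_pow 2)
  have hsq' : HasDerivAt (fun t : ℝ => (t - 1) ^ 2) (2 * (B - 1) * 1) B := by
    simpa using hsq
  have hsqne : (B - 1) ^ 2 ≠ 0 := pow_ne_zero _ hne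
  have h1 : HasDerivAt (fun t : ℝ => v₁ / (t - 1) ^ 2)
      ((0 * (B - 1) ^ 2 - v₁ * (2 * (B - 1) * 1)) / ((B - 1) ^ 2) ^ 2) B :=
    (hasDerivAt_const B v₁).div hsq' hsqne
  have hlog : HasDerivAt (fun t : ℝ => Real.log t) B⁻¹ B := Real.hasDerivAt_log hB0
  have hclog : HasDerivAt (fun t : ℝ => c * Real.log t) (c * B⁻¹) B := hlog.const_mul c
  have h2 : HasDerivAt (fun t : ℝ => c * Real.log t / (t - 1) ^ 2)
      (((c * B⁻¹) * (B - 1) ^ 2 - c * Real.log B * (2 * (B - 1) * 1)) / ((B - 1) ^ 2) ^ 2) B :=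
    hclog.div hsq' hsqne
  have h4 : HasDerivAt (fun t : ℝ => c * Real.log (t - 1)) (c * ((B - 1)⁻¹ * 1)) B :=
    by have := (((Real.hasDerivAt_log hne).comp B hsub)).const_mul c; exact this
  have h5 : HasDerivAt (fun t : ℝ => c / (t - 1))
      ((0 * (B - 1) - c * 1) / (B - 1) ^ 2) B :=
    (hasDerivAt_const B c).div hsub hne
  have := (((h1.add h2).sub hclog).add h4).add h5
  unfold K1
  exact this

theorem K1_first_integral (c : ℝ) :
    ∀ u₁ v₁ B : ℝ, 1 < B →
      (u₁ + v₁) * deriv (fun t => K1 c t v₁ B) u₁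
        + (2 * v₁ + 2 * c * Real.log B) * deriv (fun t => K1 c u₁ t B) v₁
        + (B - 1) * deriv (fun t => K1 c u₁ v₁ t) B = 0 := by
  intro u₁ v₁ B hB
  have hB0 : B ≠ 0 := by linarith
  have hne : B - 1 ≠ 0 := by linarith
  have hd1 : deriv (fun t => K1 c t v₁ B) u₁ = 0 := by
    simp [K1]
  have hd2 : deriv (fun t => K1 c u₁ t B) v₁ = 1 / (B - 1) ^ 2 := by
    have h : HasDerivAt (fun t : ℝ => K1 c u₁ t B) (1 / (B - 1) ^ 2) v₁ := by
      unfold K1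
      exact (((((hasDerivAt_id v₁).div_const ((B - 1) ^ 2)).add_const
        (c * Real.log B / (B - 1) ^ 2)).sub_const (c * Real.log B)).add_const
        (c * Real.log (B - 1))).add_const (c / (B - 1))
    exact h.deriv
  have hd3 := (K1_hasDerivAt_B c u₁ v₁ B hB).deriv
  rw [hd1, hd2, hd3]
  field_simp
  ring
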